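/- arXiv:2206.08442 — 2 statements merged into one kernel-verified Lean document; each statement's English description precedes it below -/
import Mathlib

section
/- Let m and m* be two finite MDP models over the same finite state space S, finite action space A, and discount factor γ ∈ [0,1). Let π^b be any policy, let π_m^r be a rollout policy of π^b in m, let π_m^ce be a certainty-equivalence policy in m, and set Π = {π_m^r, π_m^ce}. If m is a performance-contrasting model (PCM) of m* with respect to Π and J, then J_{m*}^{π_m^r} ≥ J_{m*}^{π_m^ce}. -/
/-- A finite Markov decision process model over state space `S` and action space `A`:
a transition kernel `p`, a reward function `r`, and an initial state distribution `d`. -/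
structure MDP (S A : Type) where
  p : S → A → PMF S
  r : S → A → S → ℝ
  d : PMF S

variable {S A : Type}

/-- The expected one-step value `Σ_{s'} p(s,a)(s') (r(s,a,s') + γ V(s'))`. -/
noncomputable def expVal [Fintype S] (m : MDP S A) (γ : ℝ) (V : S → ℝ) (s : S) (a : A) : ℝ :=
  ∑ s' : S, (m.p s a s').toReal * (m.r s a s' + γ * V s')

/-- The Bellman evaluation operator `T_m^π` of policy `π` in model `m`. -/
noncomputable def bellman [Fintype S] [Fintype A] (m : MDP S A) (γ : ℝ)
    (π : S → PMF A) (V : S → ℝ) (s : S) : ℝ :=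
  ∑ a : A, (π s a).toReal * expVal m γ V s a

/-- `V` is the value function `V_m^π`, i.e. a fixed point of the Bellman evaluation
operator `T_m^π` (which is unique since `T_m^π` is a `γ`-contraction for `γ < 1`). -/
def IsValueFun [Fintype S] [Fintype A] (m : MDP S A) (γ : ℝ) (π : S → PMF A)
    (V : S → ℝ) : Prop :=
  ∀ s, bellman m γ π V s = V s

/-- The optimal Bellman operator `T_m^*`. -/
noncomputable def optBellman [Fintype S] [Fintype A] [Nonempty A] (m : MDP S A) (γ : ℝ)
    (V : S → ℝ) (s : S) : ℝ :=
  Finset.univ.sup' Finset.univ_nonempty (fun a : A => expVal m γ V s a)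

/-- `V` is the optimal value function `V_m^*`, i.e. a fixed point of `T_m^*`. -/
def IsOptValueFun [Fintype S] [Fintype A] [Nonempty A] (m : MDP S A) (γ : ℝ)
    (V : S → ℝ) : Prop :=
  ∀ s, optBellman m γ V s = V s

/-- The performance `J_m^π = Σ_s d(s) V_m^π(s)`, expressed via the value function `V` of `π`. -/
noncomputable def Jval [Fintype S] (m : MDP S A) (V : S → ℝ) : ℝ :=
  ∑ s : S, (m.d s).toReal * V s

/-- The deterministic (stochastic) policy induced by a map `S → A`. -/
noncomputable def detPol (f : S → A) : S → PMF A := fun s => PMF.pure (f s)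

/-- A deterministic policy `g` is greedy with respect to the one-step values induced by `V`
in model `m`: at each state it picks a maximizing action.  With `V = V_m^{π^b}` this says `g`
is a rollout policy of `π^b`; with `V = V_m^*` this says `g` is a certainty-equivalence policy. -/
def IsGreedyWrt [Fintype S] (m : MDP S A) (γ : ℝ) (V : S → ℝ) (g : S → A) : Prop :=
  ∀ s a, expVal m γ V s a ≤ expVal m γ V s (g s)

/-- `m` is a performance-contrasting model (PCM) of `mstar` w.r.t. a set `P` of policies
and `J`: whenever `J_m^{πi} ≥ J_m^{πj}` for `πi, πj ∈ P`, we have `J_{m*}^{πi} ≤ J_{m*}^{πj}`. -/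
def IsPCM [Fintype S] [Fintype A] (m mstar : MDP S A) (γ : ℝ)
    (P : Set (S → PMF A)) : Prop :=
  ∀ πi ∈ P, ∀ πj ∈ P, ∀ Vi Vj Wi Wj : S → ℝ,
    IsValueFun m γ πi Vi → IsValueFun m γ πj Vj →
    IsValueFun mstar γ πi Wi → IsValueFun mstar γ πj Wj →
    Jval m Vi ≥ Jval m Vj → Jval mstar Wi ≤ Jval mstar Wj

/-- `m` is a performance-resembling model (PRM) of `mstar` w.r.t. a set `P` of policies
and `J`: whenever `J_m^{πi} ≥ J_m^{πj}` for `πi, πj ∈ P`, we have `J_{m*}^{πi} ≥ J_{m*}^{πj}`. -/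
def IsPRM [Fintype S] [Fintype A] (m mstar : MDP S A) (γ : ℝ)
    (P : Set (S → PMF A)) : Prop :=
  ∀ πi ∈ P, ∀ πj ∈ P, ∀ Vi Vj Wi Wj : S → ℝ,
    IsValueFun m γ πi Vi → IsValueFun m γ πj Vj →
    IsValueFun mstar γ πi Wi → IsValueFun mstar γ πj Wj →
    Jval m Vi ≥ Jval m Vj → Jval mstar Wi ≥ Jval mstar Wj

/-- A policy `π` is optimal in `m` if its value function coincides with `V_m^*`. -/
def IsOptimalIn [Fintype S] [Fintype A] [Nonempty A] (m : MDP S A) (γ : ℝ)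
    (π : S → PMF A) : Prop :=
  ∀ V Vstar : S → ℝ, IsValueFun m γ π V → IsOptValueFun m γ Vstar → ∀ s, V s = Vstar s

/-- `m` is a performance-minimizing model (PNM) of `mstar` w.r.t. `P` and `J`: a PCM such
that every policy in `P` optimal in `m` attains the worst possible performance in `mstar`. -/
def IsPNM [Fintype S] [Fintype A] [Nonempty A] (m mstar : MDP S A) (γ : ℝ)
    (P : Set (S → PMF A)) : Prop :=
  IsPCM m mstar γ P ∧
    ∀ π ∈ P, IsOptimalIn m γ π →
      ∀ (π' : S → PMF A) (W W' : S → ℝ),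
        IsValueFun mstar γ π W → IsValueFun mstar γ π' W' →
        Jval mstar W ≤ Jval mstar W'

/-- `m` is a performance-maximizing model (PXM) of `mstar` w.r.t. `P` and `J`: a PRM such
that every policy in `P` optimal in `m` attains the best possible performance in `mstar`. -/
def IsPXM [Fintype S] [Fintype A] [Nonempty A] (m mstar : MDP S A) (γ : ℝ)
    (P : Set (S → PMF A)) : Prop :=
  IsPRM m mstar γ P ∧
    ∀ π ∈ P, IsOptimalIn m γ π →
      ∀ (π' : S → PMF A) (W W' : S → ℝ),
        IsValueFun mstar γ π W → IsValueFun mstar γ π' W' →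
        Jval mstar W ≥ Jval mstar W'

lemma sum_p_toReal [Fintype S] (m : MDP S A) (s : S) (a : A) :
    ∑ s' : S, (m.p s a s').toReal = 1 := by
  have h := (m.p s a).tsum_coe
  rw [tsum_fintype] at h
  rw [← ENNReal.toReal_sum (fun s' _ => (m.p s a).apply_ne_top s'), h, ENNReal.toReal_one]

lemma bellman_detPol [Fintype S] [Fintype A] (m : MDP S A) (γ : ℝ)
    (f : S → A) (V : S → ℝ) (s : S) :
    bellman m γ (detPol f) V s = expVal m γ V s (f s) := by
  classical
  simp only [bellman, detPol, PMF.pure_apply, apply_ite ENNReal.toReal,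
    ENNReal.toReal_one, ENNReal.toReal_zero, ite_mul, one_mul, zero_mul]
  rw [Finset.sum_ite_eq' Finset.univ (f s) (expVal m γ V s)]
  simp

lemma expVal_sub [Fintype S] (m : MDP S A) (γ : ℝ) (V W : S → ℝ) (s : S) (a : A) :
    expVal m γ V s a - expVal m γ W s a
      = γ * ∑ s' : S, (m.p s a s').toReal * (V s' - W s') := by
  simp only [expVal, Finset.mul_sum, ← Finset.sum_sub_distrib]
  exact Finset.sum_congr rfl fun s' _ => by ring

lemma expVal_le_add [Fintype S] (m : MDP S A) (γ : ℝ) (hγ0 : 0 ≤ γ)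
    (V W : S → ℝ) (c : ℝ) (h : ∀ s', V s' ≤ W s' + c) (s : S) (a : A) :
    expVal m γ V s a ≤ expVal m γ W s a + γ * c := by
  have key : ∑ s' : S, (m.p s a s').toReal * (V s' - W s') ≤ c := by
    calc ∑ s' : S, (m.p s a s').toReal * (V s' - W s')
        ≤ ∑ s' : S, (m.p s a s').toReal * c := by
          refine Finset.sum_le_sum fun s' _ => ?_
          exact mul_le_mul_of_nonneg_left (by linarith [h s']) ENNReal.toReal_nonneg
      _ = c := by rw [← Finset.sum_mul, sum_p_toReal, one_mul]
  have h2 := expVal_sub m γ V W s a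
  nlinarith [mul_le_mul_of_nonneg_left key hγ0]

lemma fixed_le_opt [Fintype S] [Nonempty S] [Fintype A] [Nonempty A]
    (m : MDP S A) (γ : ℝ) (hγ0 : 0 ≤ γ) (hγ1 : γ < 1) (f : S → A) (V Vstar : S → ℝ)
    (hV : ∀ s, bellman m γ (detPol f) V s = V s)
    (hVstar : ∀ s, Finset.univ.sup' Finset.univ_nonempty
      (fun a : A => expVal m γ Vstar s a) = Vstar s) :
    ∀ s, V s ≤ Vstar s := by
  set M : ℝ := Finset.univ.sup' Finset.univ_nonempty (fun s : S => V s - Vstar s) with hM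
  have hstep : ∀ s, V s - Vstar s ≤ γ * M := by
    intro s
    have h1 : V s = expVal m γ V s (f s) := by rw [← hV s, bellman_detPol]
    have h2 : expVal m γ V s (f s) ≤ expVal m γ Vstar s (f s) + γ * M := by
      refine expVal_le_add m γ hγ0 V Vstar M (fun s' => ?_) s (f s)
      have := Finset.le_sup' (fun s : S => V s - Vstar s) (Finset.mem_univ s')
      linarith [this]
    have h3 : expVal m γ Vstar s (f s) ≤ Vstar s := by
      rw [← hVstar s]
      exact Finset.le_sup' _ (Finset.mem_univ (f s))
    linarith
  have hMle : M ≤ γ * M := by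
    obtain ⟨s0, _, hs0⟩ := Finset.exists_mem_eq_sup' Finset.univ_nonempty
      (fun s : S => V s - Vstar s)
    calc M = V s0 - Vstar s0 := hs0
      _ ≤ γ * M := hstep s0
  have hM0 : M ≤ 0 := by nlinarith
  intro s
  have := hstep s
  nlinarith

lemma exists_valueFun_det [Fintype S] [Nonempty S] [Fintype A]
    (m : MDP S A) (γ : ℝ) (hγ0 : 0 ≤ γ) (hγ1 : γ < 1) (f : S → A) :
    ∃ V : S → ℝ, ∀ s, bellman m γ (detPol f) V s = V s := by
  set T : (S → ℝ) → (S → ℝ) := fun V s => expVal m γ V s (f s) with hT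
  have hlip : LipschitzWith ⟨γ, hγ0⟩ T := by
    refine LipschitzWith.of_dist_le_mul fun V W => ?_
    rw [dist_pi_le_iff (by positivity)]
    intro s
    rw [Real.dist_eq]
    have h2 := expVal_sub m γ V W s (f s)
    have : |T V s - T W s| = γ * |∑ s' : S, (m.p s (f s) s').toReal * (V s' - W s')| := by
      rw [hT]; simp only []
      rw [h2, abs_mul, abs_of_nonneg hγ0]
    rw [this]
    have hsum : |∑ s' : S, (m.p s (f s) s').toReal * (V s' - W s')| ≤ dist V W := by
      calc |∑ s' : S, (m.p s (f s) s').toReal * (V s' - W s')|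
          ≤ ∑ s' : S, |(m.p s (f s) s').toReal * (V s' - W s')| :=
            Finset.abs_sum_le_sum_abs _ _
        _ ≤ ∑ s' : S, (m.p s (f s) s').toReal * dist V W := by
            refine Finset.sum_le_sum fun s' _ => ?_
            rw [abs_mul, abs_of_nonneg ENNReal.toReal_nonneg]
            exact mul_le_mul_of_nonneg_left
              (by rw [← Real.dist_eq]; exact dist_le_pi_dist V W s')
              ENNReal.toReal_nonneg
        _ = dist V W := by rw [← Finset.sum_mul, sum_p_toReal, one_mul]
    calc γ * |∑ s' : S, (m.p s (f s) s').toReal * (V s' - W s')|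
        ≤ γ * dist V W := mul_le_mul_of_nonneg_left hsum hγ0
      _ = (⟨γ, hγ0⟩ : NNReal) * dist V W := rfl
  have hC : ContractingWith ⟨γ, hγ0⟩ T := ⟨by exact_mod_cast hγ1, hlip⟩
  refine ⟨ContractingWith.fixedPoint T hC, fun s => ?_⟩
  rw [bellman_detPol]
  exact congrFun (ContractingWith.fixedPoint_isFixedPt hC) s

/-- **Proposition 1.** If `m` is a PCM of `m*` with respect to `Π = {π_m^r, π_m^ce}` and
`J`, then `J_{m*}^{π_m^r} ≥ J_{m*}^{π_m^ce}`. -/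
theorem pcm_rollout_ge_ce
    {S A : Type} [Fintype S] [Nonempty S] [Fintype A] [Nonempty A]
    (m mstar : MDP S A) (γ : ℝ) (hγ0 : 0 ≤ γ) (hγ1 : γ < 1)
    -- base policy and its value function in `m`
    (πb : S → PMF A) (Vb : S → ℝ) (hVb : IsValueFun m γ πb Vb)
    -- rollout policy of `πb` in `m`
    (πr : S → A) (hπr : IsGreedyWrt m γ Vb πr)
    -- optimal value function of `m` and a certainty-equivalence policy in `m`
    (Vstar : S → ℝ) (hVstar : IsOptValueFun m γ Vstar)
    (πce : S → A) (hπce : IsGreedyWrt m γ Vstar πce)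
    -- `m` is a PCM of `mstar` w.r.t. `Π = {π_m^r, π_m^ce}` and `J`
    (hPCM : IsPCM m mstar γ {detPol πr, detPol πce})
    -- value functions of the two policies in `mstar`
    (Wr Wce : S → ℝ)
    (hWr : IsValueFun mstar γ (detPol πr) Wr)
    (hWce : IsValueFun mstar γ (detPol πce) Wce) :
    Jval mstar Wr ≥ Jval mstar Wce := by
  classical
  -- `Vstar` is a value function of the CE policy in `m`
  have hVce : IsValueFun m γ (detPol πce) Vstar := by
    intro s
    rw [bellman_detPol]
    have h1 : expVal m γ Vstar s (πce s) = optBellman m γ Vstar s :=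
      le_antisymm (Finset.le_sup' _ (Finset.mem_univ _))
        (Finset.sup'_le _ _ fun a _ => hπce s a)
    rw [h1, hVstar s]
  -- a value function of the rollout policy in `m`
  obtain ⟨Vr, hVr⟩ := exists_valueFun_det m γ hγ0 hγ1 πr
  -- `Vr ≤ Vstar`
  have hle : ∀ s, Vr s ≤ Vstar s :=
    fixed_le_opt m γ hγ0 hγ1 πr Vr Vstar hVr hVstar
  have hJ : Jval m Vstar ≥ Jval m Vr := by
    refine Finset.sum_le_sum fun s _ => ?_
    exact mul_le_mul_of_nonneg_left (hle s) ENNReal.toReal_nonneg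
  exact hPCM (detPol πce) (Set.mem_insert_iff.mpr (Or.inr rfl))
    (detPol πr) (Set.mem_insert _ _) Vstar Vr Wce Wr hVce hVr hWce hWr hJ
end

section
/- Let m and m* be two finite MDP models over the same finite state space S, finite action space A, and discount factor γ ∈ [0,1). Let π^b be any policy, let π_m^r be a rollout policy of π^b in m, let π_m^ce be a certainty-equivalence policy in m, and set Π = {π_m^r, π_m^ce}. If m is a performance-resembling model (PRM) of m* with respect to Π and J, then J_{m*}^{π_m^ce} ≥ J_{m*}^{π_m^r}. -/
variable {S A : Type}

section Aux

lemma pmf_sum_toReal {α : Type} [Fintype α] (q : PMF α) :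
    ∑ a : α, (q a).toReal = 1 := by
  have h : ∑ a : α, q a = 1 := by
    rw [← tsum_fintype (L := SummationFilter.unconditional _)]; exact q.tsum_coe
  rw [← ENNReal.toReal_sum (fun a _ => q.apply_ne_top a), h, ENNReal.toReal_one]

lemma bellman_sub_le [Fintype S] [Fintype A] (m : MDP S A) {γ : ℝ} (hγ0 : 0 ≤ γ)
    (π : S → PMF A) (V W : S → ℝ) (C : ℝ) (h : ∀ s', V s' - W s' ≤ C) (s : S) :
    bellman m γ π V s - bellman m γ π W s ≤ γ * C := by
  have hexp : ∀ a, expVal m γ V s a - expVal m γ W s a ≤ γ * C := by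
    intro a
    rw [expVal, expVal, ← Finset.sum_sub_distrib]
    have : ∀ s' ∈ Finset.univ, (m.p s a s').toReal * (m.r s a s' + γ * V s') -
        (m.p s a s').toReal * (m.r s a s' + γ * W s') ≤ (m.p s a s').toReal * (γ * C) := by
      intro s' _
      rw [← mul_sub]
      refine mul_le_mul_of_nonneg_left ?_ ENNReal.toReal_nonneg
      have : m.r s a s' + γ * V s' - (m.r s a s' + γ * W s') = γ * (V s' - W s') := by ring
      rw [this]
      exact mul_le_mul_of_nonneg_left (h s') hγ0
    calc ∑ s' : S, ((m.p s a s').toReal * (m.r s a s' + γ * V s') -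
          (m.p s a s').toReal * (m.r s a s' + γ * W s'))
        ≤ ∑ s' : S, (m.p s a s').toReal * (γ * C) := Finset.sum_le_sum this
      _ = (∑ s' : S, (m.p s a s').toReal) * (γ * C) := by rw [Finset.sum_mul]
      _ = γ * C := by rw [pmf_sum_toReal]; ring
  rw [bellman, bellman, ← Finset.sum_sub_distrib]
  calc ∑ a : A, ((π s a).toReal * expVal m γ V s a - (π s a).toReal * expVal m γ W s a)
      ≤ ∑ a : A, (π s a).toReal * (γ * C) := by
        refine Finset.sum_le_sum fun a _ => ?_
        rw [← mul_sub]
        exact mul_le_mul_of_nonneg_left (hexp a) ENNReal.toReal_nonneg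
    _ = (∑ a : A, (π s a).toReal) * (γ * C) := by rw [Finset.sum_mul]
    _ = γ * C := by rw [pmf_sum_toReal]; ring

lemma exists_valueFun [Fintype S] [Nonempty S] [Fintype A] (m : MDP S A) {γ : ℝ}
    (hγ0 : 0 ≤ γ) (hγ1 : γ < 1) (π : S → PMF A) :
    ∃ V : S → ℝ, IsValueFun m γ π V := by
  set T : (S → ℝ) → (S → ℝ) := fun V => bellman m γ π V with hT
  have hlip : LipschitzWith ⟨γ, hγ0⟩ T := by
    intro V W
    rw [edist_dist, edist_dist, ← ENNReal.ofReal_coe_nnreal (p := ⟨γ, hγ0⟩),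
      ← ENNReal.ofReal_mul (by positivity)]
    refine ENNReal.ofReal_le_ofReal ?_
    rw [dist_pi_le_iff (by positivity)]
    intro s
    rw [Real.dist_eq, abs_sub_le_iff]
    constructor
    · exact bellman_sub_le m hγ0 π V W (dist V W)
        (fun s' => by
          have := dist_le_pi_dist V W s'
          rw [Real.dist_eq, abs_sub_le_iff] at this; exact this.1) s
    · exact bellman_sub_le m hγ0 π W V (dist V W)
        (fun s' => by
          have := dist_le_pi_dist V W s'
          rw [Real.dist_eq, abs_sub_le_iff] at this; exact this.2) s
  have hcon : ContractingWith ⟨γ, hγ0⟩ T := ⟨by exact_mod_cast hγ1, hlip⟩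
  refine ⟨hcon.fixedPoint T, fun s => ?_⟩
  exact congrFun (ContractingWith.fixedPoint_isFixedPt hcon) s

lemma bellman_det [Fintype S] [Fintype A] [DecidableEq A] (m : MDP S A) (γ : ℝ)
    (g : S → A) (V : S → ℝ) (s : S) :
    bellman m γ (detPol g) V s = expVal m γ V s (g s) := by
  rw [bellman]
  have : ∀ a : A, ((detPol g s) a).toReal * expVal m γ V s a =
      if a = g s then expVal m γ V s a else 0 := by
    intro a
    rw [detPol, PMF.pure_apply]
    split <;> simp
  rw [Finset.sum_congr rfl fun a _ => this a, Finset.sum_ite_eq' Finset.univ (g s)]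
  simp

end Aux

/-- **Proposition 2.** If `m` is a PRM of `m*` with respect to `Π = {π_m^r, π_m^ce}` and
`J`, then `J_{m*}^{π_m^ce} ≥ J_{m*}^{π_m^r}`. -/
theorem prm_ce_ge_rollout
    {S A : Type} [Fintype S] [Nonempty S] [Fintype A] [Nonempty A]
    (m mstar : MDP S A) (γ : ℝ) (hγ0 : 0 ≤ γ) (hγ1 : γ < 1)
    -- base policy and its value function in `m`
    (πb : S → PMF A) (Vb : S → ℝ) (hVb : IsValueFun m γ πb Vb)
    -- rollout policy of `πb` in `m`
    (πr : S → A) (hπr : IsGreedyWrt m γ Vb πr)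
    -- optimal value function of `m` and a certainty-equivalence policy in `m`
    (Vstar : S → ℝ) (hVstar : IsOptValueFun m γ Vstar)
    (πce : S → A) (hπce : IsGreedyWrt m γ Vstar πce)
    -- `m` is a PRM of `mstar` w.r.t. `Π = {π_m^r, π_m^ce}` and `J`
    (hPRM : IsPRM m mstar γ {detPol πr, detPol πce})
    -- value functions of the two policies in `mstar`
    (Wr Wce : S → ℝ)
    (hWr : IsValueFun mstar γ (detPol πr) Wr)
    (hWce : IsValueFun mstar γ (detPol πce) Wce) :
    Jval mstar Wce ≥ Jval mstar Wr := by
  classical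
  -- `Vstar` is the value function of `detPol πce` in `m`
  have hVce : IsValueFun m γ (detPol πce) Vstar := by
    intro s
    rw [bellman_det]
    have hle : expVal m γ Vstar s (πce s) ≤ optBellman m γ Vstar s :=
      Finset.le_sup' _ (Finset.mem_univ _)
    have hge : optBellman m γ Vstar s ≤ expVal m γ Vstar s (πce s) :=
      Finset.sup'_le _ _ (fun a _ => hπce s a)
    rw [le_antisymm hle hge, hVstar s]
  obtain ⟨Vr, hVr⟩ := exists_valueFun m hγ0 hγ1 (detPol πr)
  -- pointwise `Vr ≤ Vstar`
  have hle : ∀ s, Vr s ≤ Vstar s := by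
    set M := Finset.univ.sup' Finset.univ_nonempty (fun s => Vr s - Vstar s) with hM
    have hstep : ∀ s : S, Vr s - Vstar s ≤ γ * M := by
      intro s
      have h1 : bellman m γ (detPol πr) Vstar s ≤ Vstar s := by
        rw [bellman_det]
        calc expVal m γ Vstar s (πr s) ≤ optBellman m γ Vstar s :=
              Finset.le_sup' _ (Finset.mem_univ _)
          _ = Vstar s := hVstar s
      have h2 := bellman_sub_le m hγ0 (detPol πr) Vr Vstar M
        (fun s' => Finset.le_sup' (fun s => Vr s - Vstar s) (Finset.mem_univ s')) s
      have h3 := hVr s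
      linarith
    have hMle : M ≤ γ * M := Finset.sup'_le _ _ (fun s _ => hstep s)
    have hM0 : M ≤ 0 := by nlinarith
    intro s
    have := Finset.le_sup' (f := fun s => Vr s - Vstar s) (Finset.mem_univ s)
    rw [← hM] at this
    linarith
  have hJ : Jval m Vstar ≥ Jval m Vr :=
    Finset.sum_le_sum fun s _ => mul_le_mul_of_nonneg_left (hle s) ENNReal.toReal_nonneg
  exact hPRM (detPol πce) (Set.mem_insert_of_mem _ rfl) (detPol πr) (Set.mem_insert _ _)
    Vstar Vr Wce Wr hVce hVr hWce hWr hJ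
end
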